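/- Let h_{ℓ−1} < h_ℓ < h_{ℓ+1} be real breakpoints. Then the linear system in variables (a,b,c,d,e) ∈ ℝ₊⁵: (h_{ℓ+1} − h_{ℓ−1})c = h_{ℓ+1} − h_ℓ, (h_ℓ − h_{ℓ−1})d + (h_{ℓ+1} − h_ℓ)c = (h_{ℓ+1} − h_{ℓ−1}) + (h_{ℓ+1} − h_ℓ)e, (h_ℓ − h_{ℓ−1}) + (h_{ℓ+1} − h_{ℓ−1})a + (h_{ℓ+1} − h_ℓ)b = (h_{ℓ+1} − h_{ℓ−1})d, together with positive semidefiniteness of the 3×3 matrix [[c, −d/2, (d−a−c)/2], [−d/2, −c+d+e, (−b+c−e)/2], [(d−a−c)/2, (−b+c−e)/2, a+b−d]], is satisfied by a = c = (h_{ℓ+1}−h_ℓ)/(h_{ℓ+1}−h_{ℓ−1}), b = (h_{ℓ+1}−h_{ℓ−1})/(h_{ℓ+1}−h_ℓ), d = 2, e = (h_ℓ−h_{ℓ−1})²/((h_{ℓ+1}−h_{ℓ−1})(h_{ℓ+1}−h_ℓ)). -/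

import Mathlib

open Matrix

/-- Explicit dual feasibility certificate in the proof of Theorem 4.2: the given values
of `(a,b,c,d,e)` are nonnegative, satisfy the three linear equations, and make the
associated 3×3 matrix positive semidefinite. -/
theorem stmt17 (h0 h1 h2 : ℝ) (H1 : h0 < h1) (H2 : h1 < h2)
    (a b c d e : ℝ)
    (ha : a = (h2 - h1) / (h2 - h0))
    (hb : b = (h2 - h0) / (h2 - h1))
    (hc : c = (h2 - h1) / (h2 - h0))
    (hd : d = 2)
    (he : e = (h1 - h0) ^ 2 / ((h2 - h0) * (h2 - h1))) :
    (0 ≤ a ∧ 0 ≤ b ∧ 0 ≤ c ∧ 0 ≤ d ∧ 0 ≤ e) ∧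
    (h2 - h0) * c = h2 - h1 ∧
    (h1 - h0) * d + (h2 - h1) * c = (h2 - h0) + (h2 - h1) * e ∧
    (h1 - h0) + (h2 - h0) * a + (h2 - h1) * b = (h2 - h0) * d ∧
    (!![c, -d / 2, (d - a - c) / 2;
        -d / 2, -c + d + e, (-b + c - e) / 2;
        (d - a - c) / 2, (-b + c - e) / 2, a + b - d] : Matrix (Fin 3) (Fin 3) ℝ).PosSemidef := by
  have hβ : 0 < h2 - h1 := by linarith
  have hα : 0 < h1 - h0 := by linarith
  have hγ : 0 < h2 - h0 := by linarith
  subst ha hb hc hd he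
  rw [Matrix.posSemidef_iff_dotProduct_mulVec]
  refine ⟨⟨?_, ?_, ?_, ?_, ?_⟩, ?_, ?_, ?_, ?_, ?_⟩
  · positivity
  · positivity
  · positivity
  · norm_num
  · positivity
  · field_simp
  · field_simp; ring
  · field_simp; ring
  · unfold Matrix.IsHermitian
    ext i j
    fin_cases i <;> fin_cases j <;> simp [Matrix.conjTranspose_apply]
  · intro x
    simp only [star, dotProduct, mulVec, Fin.sum_univ_succ, Fin.sum_univ_zero,
        Matrix.cons_val', Matrix.cons_val_zero, Matrix.cons_val_one, Matrix.head_cons,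
        Matrix.empty_val', Matrix.cons_val_fin_one, Matrix.head_fin_const, id,
        Matrix.of_apply, Matrix.cons_val_succ, Fin.succ_zero_eq_one, Fin.succ_one_eq_two]
    have h := mul_nonneg (le_of_lt (div_pos hβ hγ))
      (sq_nonneg (x 0 - ((h2 - h0) / (h2 - h1)) * x 1 + ((h1 - h0) / (h2 - h1)) * x 2))
    refine le_trans h (le_of_eq ?_)
    field_simp
    ring
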